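/- Let U be an update procedure of countable ordinal α ≥ 1 and define g : ℕ → ℕ by: g x = y if there exists i with U(U^(i)) = (0, x, y) and i is the least element of {n : ∃z, U(U^(n)) = (0, x, z)}, and g x = 0 if no such i exists. Then for every finite function g₀ ≤ g: if the sequence g₀ * 0^{α−1} is U-generated and a sequence f of ordinal α − 1 is U_{g₀}-generated, then g₀ * f is U-generated (Reduction Lemma, successor case, part 1). -/

import Mathlib

/-- Transfinite sequences of functions are modeled as functions on all ordinals;
an update procedure of ordinal `α` only depends on (and only updates) the
entries with index below `α`, and a "sequence of ordinal `β`" is read off from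
its entries with index below `β`. -/
abbrev OSeq := Ordinal → ℕ → ℕ

/-- `U` is an update procedure of ordinal `α`. -/
def IsUpdateProc (α : Ordinal) (U : OSeq → Option (Ordinal × ℕ × ℕ)) : Prop :=
  (∀ f : OSeq, ∃ A : Finset (Ordinal × ℕ), (∀ p ∈ A, p.1 < α) ∧
      ∀ g : OSeq, (∀ p ∈ A, g p.1 p.2 = f p.1 p.2) → U g = U f) ∧
  (∀ (f : OSeq) (β : Ordinal) (n m : ℕ), U f = some (β, n, m) → β < α) ∧
  (∀ (f g : OSeq) (β : Ordinal) (n m i j : ℕ),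
      (∀ γ, γ < β → f γ = g γ) →
      U f = some (β, n, m) → g β n = m → U g = some (β, i, j) → i ≠ n)

/-- A sequence is finite (below `α`) if it has nonzero values in only
finitely many places. -/
def OFinite (α : Ordinal) (f : OSeq) : Prop :=
  Set.Finite {p : Ordinal × ℕ | p.1 < α ∧ f p.1 p.2 ≠ 0}

/-- Controlled update `f ⊕ u`: update the `γ`-th function at `n` to value `m`
and erase (reset to `0`) everything of higher index. -/
noncomputable def oplus (f : OSeq) : Option (Ordinal × ℕ × ℕ) → OSeq
  | none => f
  | some (γ, n, m) => fun β x =>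
      if β < γ then f β x
      else if β = γ then (if x = n then m else f β x)
      else 0

/-- The learning process generated by `U`:
`U^(0)` is the constantly `0` sequence and `U^(i+1) = U^(i) ⊕ U(U^(i))`. -/
noncomputable def learnProc (U : OSeq → Option (Ordinal × ℕ × ℕ)) : ℕ → OSeq
  | 0 => fun _ _ => 0
  | i + 1 => oplus (learnProc U i) (U (learnProc U i))

/-- `f` is `U`-generated. -/
def IsGenerated (U : OSeq → Option (Ordinal × ℕ × ℕ)) (f : OSeq) : Prop :=
  ∃ i : ℕ, f = learnProc U i

/-- Concatenation `g * f` of a sequence `g` of ordinal `β` with a sequence `f`: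
entries below `β` come from `g`, higher entries from `f` (shifted by `β`). -/
noncomputable def concatSeq (β : Ordinal) (g f : OSeq) : OSeq :=
  fun δ => if δ < β then g δ else f (δ - β)

/-- The shifted procedure `U_g` (for `g` a sequence of ordinal `β`):
`U_g f = (γ,n,m)` if `U (g * f) = (β + γ, n, m)`, and `U_g f = ∅` otherwise. -/
noncomputable def shiftU (U : OSeq → Option (Ordinal × ℕ × ℕ)) (β : Ordinal)
    (g : OSeq) : OSeq → Option (Ordinal × ℕ × ℕ) :=
  fun f =>
    match U (concatSeq β g f) with
    | none => none
    | some (δ, n, m) => if β ≤ δ then some (δ - β, n, m) else none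

/-- The constantly zero sequence. -/
def zeroSeq : OSeq := fun _ _ => 0

/-- Reduction Lemma (successor case, part 1): let `U` be an update procedure of
countable ordinal `α ≥ 1` and let `g : ℕ → ℕ` be defined by `g x = y` if
`U (U^(i)) = (0, x, y)` for the least `i` such that `U (U^(i))` is an update at
`(0, x)`, and `g x = 0` if there is no such `i`. Then for every finite function
`g₀ ≤ g`: if `g₀ * 0^(α-1)` is `U`-generated and `f` (of ordinal `α - 1`) is
`U_{g₀}`-generated, then `g₀ * f` is `U`-generated. -/
private lemma concat_oplus (g₀ : ℕ → ℕ) (f : OSeq) (δ : Ordinal) (n m : ℕ) :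
    concatSeq 1 (fun _ => g₀) (oplus f (some (δ, n, m))) =
    oplus (concatSeq 1 (fun _ => g₀) f) (some (1 + δ, n, m)) := by
  funext β x
  simp only [concatSeq, oplus]
  by_cases h1 : β < 1
  · have h2 : β < 1 + δ := h1.trans_le (le_self_add (a := (1 : Ordinal)) (b := δ))
    simp [h1, h2]
  · push_neg at h1
    have hβ : 1 + (β - 1) = β := Ordinal.add_sub_cancel_of_le h1
    have hlt : β - 1 < δ ↔ β < 1 + δ := by
      constructor
      · intro h; rw [← hβ]; exact (add_lt_add_iff_left 1).mpr h
      · intro h; rw [← hβ] at h; exact lt_of_add_lt_add_left h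
    have heq : β - 1 = δ ↔ β = 1 + δ := by
      constructor
      · intro h; rw [← hβ, h]
      · intro h; rw [← hβ] at h; exact add_left_cancel h
    simp only [if_neg (not_lt.2 h1)]
    by_cases h3 : β - 1 < δ
    · rw [if_pos h3, if_pos (hlt.mp h3)]
    · rw [if_neg h3, if_neg (fun h => h3 (hlt.mpr h))]
      by_cases h4 : β - 1 = δ
      · rw [if_pos h4, if_pos (heq.mp h4)]
      · rw [if_neg h4, if_neg (fun h => h4 (heq.mpr h))]

theorem reduction_lemma_successor_part1 (α : Ordinal) (hα : 1 ≤ α)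
    (hcount : α.card ≤ Cardinal.aleph0)
    (U : OSeq → Option (Ordinal × ℕ × ℕ)) (hU : IsUpdateProc α U)
    (g : ℕ → ℕ)
    (hg : ∀ x : ℕ,
      (∃ i : ℕ, U (learnProc U i) = some (0, x, g x) ∧
        ∀ j < i, ∀ z : ℕ, U (learnProc U j) ≠ some (0, x, z))
      ∨ (g x = 0 ∧ ∀ i : ℕ, ∀ z : ℕ, U (learnProc U i) ≠ some (0, x, z)))
    (g₀ : ℕ → ℕ) (hfin : Set.Finite {n : ℕ | g₀ n ≠ 0})
    (hle : ∀ n, g₀ n ≠ 0 → g₀ n = g n)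
    (hgen : IsGenerated U (concatSeq 1 (fun _ => g₀) zeroSeq))
    (f : OSeq) (hf : IsGenerated (shiftU U 1 (fun _ => g₀)) f) :
    IsGenerated U (concatSeq 1 (fun _ => g₀) f) := by
  obtain ⟨k, hk⟩ := hf
  subst hk
  induction k with
  | zero => exact hgen
  | succ k ih =>
    obtain ⟨j, hj⟩ := ih
    set f₀ := learnProc (shiftU U 1 fun _ => g₀) k with hf₀
    show IsGenerated U (concatSeq 1 (fun _ => g₀)
      (oplus f₀ (shiftU U 1 (fun _ => g₀) f₀)))
    cases hc : U (concatSeq 1 (fun _ => g₀) f₀) with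
    | none =>
      have hs : shiftU U 1 (fun _ => g₀) f₀ = none := by
        unfold shiftU; rw [hc]
      rw [hs]; exact ⟨j, hj⟩
    | some p =>
      obtain ⟨δ', n, m⟩ := p
      by_cases hδ : (1 : Ordinal) ≤ δ'
      · have hs : shiftU U 1 (fun _ => g₀) f₀ = some (δ' - 1, n, m) := by
          unfold shiftU; rw [hc]; exact if_pos hδ
        rw [hs, concat_oplus, Ordinal.add_sub_cancel_of_le hδ]
        exact ⟨j + 1, by rw [learnProc, ← hj, hc]⟩
      · have hs : shiftU U 1 (fun _ => g₀) f₀ = none := by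
          unfold shiftU; rw [hc]; exact if_neg hδ
        rw [hs]; exact ⟨j, hj⟩
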